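/- Let α ∈ ℚ \ {0, ±1} and let (t,u) ∈ ℚ² with u² = α²t⁴ - (α²+1)²t² + 4α², u ≠ 0. Define g_α(t) = (t⁴+4)(t⁴(α²-1)²+4t²(α²+1)²+4(α²-1)²)(α²t⁴-(α²+1)²t²+4α²). Then the point ((t⁴+4)(α²+1)²/(4u²), t(α²+1)³/(8αu⁴)) satisfies g_α(t)·y² = x(x-1)(x-(α²+1)²/(4α²)). -/

import Mathlib

set_option maxHeartbeats 2000000


theorem stmt_7 (α t u : ℚ) (h0 : α ≠ 0) (h1 : α ≠ 1) (h2 : α ≠ -1)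
    (hu : u^2 = α^2*t^4 - (α^2+1)^2*t^2 + 4*α^2) (hu0 : u ≠ 0) :
    let g := (t^4+4)*(t^4*(α^2-1)^2+4*t^2*(α^2+1)^2+4*(α^2-1)^2)*(α^2*t^4-(α^2+1)^2*t^2+4*α^2)
    let x := (t^4+4)*(α^2+1)^2/(4*u^2)
    let y := t*(α^2+1)^3/(8*α*u^4)
    g * y^2 = x*(x-1)*(x-(α^2+1)^2/(4*α^2)) := by
  intro g x y
  simp only [g, x, y]
  field_simp
  ring_nf
  rw [show u^6 = (u^2)^3 by ring, show u^4 = (u^2)^2 by ring,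
      hu]
  ring
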